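/- Let Ω ⊆ ℂ be open, a ≠ 0 and C real constants, and h, ψ holomorphic functions on Ω. Set b = a·(h + h̄) = 2a·Re h and c = C·e^{2 Re ψ} as functions of (x,y), x+iy ∈ Ω. Then the equation a(c_xx + c_yy) + b(b_xx + b_yy) = b_x² + b_y² holds on Ω if and only if a·C·|ψ′|²·|e^ψ|² = a²·|h′|² on Ω. In particular, if h′ is not identically zero then C/a is positive on a nonempty open set and hence C/a ≥ 0. -/

import Mathlib

/-- Partial derivative in the first variable of a function of two real variables. -/
noncomputable def pdx2 (f : ℝ → ℝ → ℝ) : ℝ → ℝ → ℝ :=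
  fun x y => deriv (fun t => f t y) x

/-- Partial derivative in the second variable of a function of two real variables. -/
noncomputable def pdy2 (f : ℝ → ℝ → ℝ) : ℝ → ℝ → ℝ :=
  fun x y => deriv (fun t => f x t) y

open Complex

lemma lineX (f : ℂ → ℂ) (x y : ℝ) (hf : DifferentiableAt ℂ f (x + y * I)) :
    HasDerivAt (fun t : ℝ => f (t + y * I)) (deriv f (x + y * I)) x := by
  have h1 : HasDerivAt (fun w : ℂ => f (w + y * I)) (deriv f (↑x + ↑y * I)) ↑x := by
    have := hf.hasDerivAt.comp (x : ℂ) ((hasDerivAt_id (x : ℂ)).add_const (↑y * I))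
    simpa [Function.comp_def] using this
  exact h1.comp_ofReal

lemma lineY (f : ℂ → ℂ) (x y : ℝ) (hf : DifferentiableAt ℂ f (x + y * I)) :
    HasDerivAt (fun t : ℝ => f (x + t * I)) (deriv f (x + y * I) * I) y := by
  have h1 : HasDerivAt (fun w : ℂ => f (↑x + w * I)) (deriv f (↑x + ↑y * I) * I) ↑y := by
    have h2 : HasDerivAt (fun w : ℂ => ↑x + w * I) I ↑y := by
      simpa using ((hasDerivAt_id (y : ℂ)).mul_const I).const_add (x : ℂ)
    have := hf.hasDerivAt.comp (y : ℂ) h2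
    simpa [Function.comp_def] using this
  exact h1.comp_ofReal

lemma HasDerivAt.complexRe {g : ℝ → ℂ} {g' : ℂ} {x : ℝ} (hg : HasDerivAt g g' x) :
    HasDerivAt (fun t => (g t).re) g'.re x := by
  simpa [Function.comp_def] using Complex.reCLM.hasFDerivAt.comp_hasDerivAt x hg

/-- the master pointwise computation -/
lemma key_computation
    (Ω : Set ℂ) (hΩ : IsOpen Ω) (a C : ℝ)
    (h ψ : ℂ → ℂ)
    (hh : DifferentiableOn ℂ h Ω) (hψ : DifferentiableOn ℂ ψ Ω)
    (b c : ℝ → ℝ → ℝ)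
    (hb : ∀ x y : ℝ, b x y = 2 * a * (h (x + y * Complex.I)).re)
    (hc : ∀ x y : ℝ, c x y = C * Real.exp (2 * (ψ (x + y * Complex.I)).re))
    (x y : ℝ) (hz : (↑x + ↑y * I) ∈ Ω) :
    a * (pdx2 (pdx2 c) x y + pdy2 (pdy2 c) x y) +
        b x y * (pdx2 (pdx2 b) x y + pdy2 (pdy2 b) x y)
      - ((pdx2 b x y)^2 + (pdy2 b x y)^2)
    = 4 * (a * C * ‖deriv ψ (↑x + ↑y * I)‖^2
            * Real.exp (2 * (ψ (↑x + ↑y * I)).re)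
          - a^2 * ‖deriv h (↑x + ↑y * I)‖^2) := by
  have hh' : DifferentiableOn ℂ (deriv h) Ω := ((hh.analyticOnNhd hΩ).deriv).differentiableOn
  have hψ' : DifferentiableOn ℂ (deriv ψ) Ω := ((hψ.analyticOnNhd hΩ).deriv).differentiableOn
  have hUx : IsOpen {t : ℝ | (↑t + ↑y * I) ∈ Ω} :=
    hΩ.preimage (by continuity : Continuous fun t : ℝ => (↑t + ↑y * I))
  have hUy : IsOpen {t : ℝ | (↑x + ↑t * I) ∈ Ω} :=
    hΩ.preimage (by continuity : Continuous fun t : ℝ => (↑x + ↑t * I))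
  have dA : ∀ (f : ℂ → ℂ), DifferentiableOn ℂ f Ω → ∀ w ∈ Ω, DifferentiableAt ℂ f w :=
    fun f hf w hw => hf.differentiableAt (hΩ.mem_nhds hw)
  -- first-order formulas for b
  have e1 : ∀ t : ℝ, (↑t + ↑y * I) ∈ Ω →
      pdx2 b t y = 2 * a * (deriv h (↑t + ↑y * I)).re := by
    intro t ht
    have hfun : (fun s : ℝ => b s y) = fun s : ℝ => 2 * a * (h (↑s + ↑y * I)).re :=
      funext fun s => hb s y
    have := (((lineX h t y (dA h hh _ ht)).complexRe).const_mul (2 * a)).deriv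
    simp only [pdx2, hfun]
    exact this
  have e2 : ∀ t : ℝ, (↑x + ↑t * I) ∈ Ω →
      pdy2 b x t = 2 * a * (deriv h (↑x + ↑t * I) * I).re := by
    intro t ht
    have hfun : (fun s : ℝ => b x s) = fun s : ℝ => 2 * a * (h (↑x + ↑s * I)).re :=
      funext fun s => hb x s
    have := (((lineY h x t (dA h hh _ ht)).complexRe).const_mul (2 * a)).deriv
    simp only [pdy2, hfun]
    exact this
  have e3 : ∀ t : ℝ, (↑t + ↑y * I) ∈ Ω →
      pdx2 c t y = C * (Real.exp (2 * (ψ (↑t + ↑y * I)).re)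
        * (2 * (deriv ψ (↑t + ↑y * I)).re)) := by
    intro t ht
    have hfun : (fun s : ℝ => c s y) = fun s : ℝ => C * Real.exp (2 * (ψ (↑s + ↑y * I)).re) :=
      funext fun s => hc s y
    have := ((((lineX ψ t y (dA ψ hψ _ ht)).complexRe).const_mul 2).exp.const_mul C).deriv
    simp only [pdx2, hfun]
    exact this
  have e4 : ∀ t : ℝ, (↑x + ↑t * I) ∈ Ω →
      pdy2 c x t = C * (Real.exp (2 * (ψ (↑x + ↑t * I)).re)
        * (2 * (deriv ψ (↑x + ↑t * I) * I).re)) := by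
    intro t ht
    have hfun : (fun s : ℝ => c x s) = fun s : ℝ => C * Real.exp (2 * (ψ (↑x + ↑s * I)).re) :=
      funext fun s => hc x s
    have := ((((lineY ψ x t (dA ψ hψ _ ht)).complexRe).const_mul 2).exp.const_mul C).deriv
    simp only [pdy2, hfun]
    exact this
  -- second-order values at (x, y)
  set z : ℂ := ↑x + ↑y * I with hzdef
  have hxmem : x ∈ {t : ℝ | (↑t + ↑y * I) ∈ Ω} := hz
  have hymem : y ∈ {t : ℝ | (↑x + ↑t * I) ∈ Ω} := hz
  have f1 : pdx2 (pdx2 b) x y = 2 * a * (deriv (deriv h) z).re := by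
    have hev : (fun t : ℝ => pdx2 b t y)
        =ᶠ[nhds x] fun t : ℝ => 2 * a * (deriv h (↑t + ↑y * I)).re :=
      Filter.eventuallyEq_of_mem (hUx.mem_nhds hxmem) fun t ht => e1 t ht
    have hd := (((lineX (deriv h) x y (dA _ hh' _ hz)).complexRe).const_mul (2 * a)).deriv
    calc pdx2 (pdx2 b) x y = deriv (fun t : ℝ => pdx2 b t y) x := rfl
      _ = deriv (fun t : ℝ => 2 * a * (deriv h (↑t + ↑y * I)).re) x := hev.deriv_eq
      _ = 2 * a * (deriv (deriv h) z).re := hd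
  have f2 : pdy2 (pdy2 b) x y = 2 * a * ((deriv (deriv h) z * I) * I).re := by
    have hev : (fun t : ℝ => pdy2 b x t)
        =ᶠ[nhds y] fun t : ℝ => 2 * a * (deriv h (↑x + ↑t * I) * I).re :=
      Filter.eventuallyEq_of_mem (hUy.mem_nhds hymem) fun t ht => e2 t ht
    have hd := ((((lineY (deriv h) x y (dA _ hh' _ hz)).mul_const I).complexRe).const_mul
      (2 * a)).deriv
    calc pdy2 (pdy2 b) x y = deriv (fun t : ℝ => pdy2 b x t) y := rfl
      _ = deriv (fun t : ℝ => 2 * a * (deriv h (↑x + ↑t * I) * I).re) y := hev.deriv_eq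
      _ = 2 * a * ((deriv (deriv h) z * I) * I).re := hd
  have f3 : pdx2 (pdx2 c) x y
      = C * ((Real.exp (2 * (ψ z).re) * (2 * (deriv ψ z).re)) * (2 * (deriv ψ z).re)
          + Real.exp (2 * (ψ z).re) * (2 * (deriv (deriv ψ) z).re)) := by
    have hev : (fun t : ℝ => pdx2 c t y)
        =ᶠ[nhds x] fun t : ℝ => C * (Real.exp (2 * (ψ (↑t + ↑y * I)).re)
          * (2 * (deriv ψ (↑t + ↑y * I)).re)) :=
      Filter.eventuallyEq_of_mem (hUx.mem_nhds hxmem) fun t ht => e3 t ht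
    have hE : HasDerivAt (fun t : ℝ => Real.exp (2 * (ψ (↑t + ↑y * I)).re))
        (Real.exp (2 * (ψ z).re) * (2 * (deriv ψ z).re)) x :=
      (((lineX ψ x y (dA ψ hψ _ hz)).complexRe).const_mul 2).exp
    have hP : HasDerivAt (fun t : ℝ => 2 * (deriv ψ (↑t + ↑y * I)).re)
        (2 * (deriv (deriv ψ) z).re) x :=
      ((lineX (deriv ψ) x y (dA _ hψ' _ hz)).complexRe).const_mul 2
    have hd := ((hE.mul hP).const_mul C).deriv
    calc pdx2 (pdx2 c) x y = deriv (fun t : ℝ => pdx2 c t y) x := rfl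
      _ = _ := hev.deriv_eq
      _ = _ := hd
  have f4 : pdy2 (pdy2 c) x y
      = C * ((Real.exp (2 * (ψ z).re) * (2 * (deriv ψ z * I).re)) * (2 * (deriv ψ z * I).re)
          + Real.exp (2 * (ψ z).re) * (2 * ((deriv (deriv ψ) z * I) * I).re)) := by
    have hev : (fun t : ℝ => pdy2 c x t)
        =ᶠ[nhds y] fun t : ℝ => C * (Real.exp (2 * (ψ (↑x + ↑t * I)).re)
          * (2 * (deriv ψ (↑x + ↑t * I) * I).re)) :=
      Filter.eventuallyEq_of_mem (hUy.mem_nhds hymem) fun t ht => e4 t ht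
    have hE : HasDerivAt (fun t : ℝ => Real.exp (2 * (ψ (↑x + ↑t * I)).re))
        (Real.exp (2 * (ψ z).re) * (2 * (deriv ψ z * I).re)) y :=
      (((lineY ψ x y (dA ψ hψ _ hz)).complexRe).const_mul 2).exp
    have hP : HasDerivAt (fun t : ℝ => 2 * (deriv ψ (↑x + ↑t * I) * I).re)
        (2 * ((deriv (deriv ψ) z * I) * I).re) y :=
      (((lineY (deriv ψ) x y (dA _ hψ' _ hz)).mul_const I).complexRe).const_mul 2
    have hd := ((hE.mul hP).const_mul C).deriv
    calc pdy2 (pdy2 c) x y = deriv (fun t : ℝ => pdy2 c x t) y := rfl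
      _ = _ := hev.deriv_eq
      _ = _ := hd
  rw [f1, f2, f3, f4, e1 x hz, e2 y hz]
  simp only [Complex.sq_norm, Complex.normSq_apply, Complex.mul_re, Complex.mul_im, Complex.I_re, Complex.I_im]
  ring

/-- with `b = a(h + h̄) = 2a·Re h` and `c = C·|e^ψ|² = C·e^{2Reψ}`
(`h, ψ` holomorphic on open `Ω ⊆ ℂ`, `a ≠ 0`), equation (two),
`a(c_xx + c_yy) + b(b_xx + b_yy) = b_x² + b_y²`, holds on `Ω` iff
`a·C·|ψ′|²·|e^ψ|² = a²·|h′|²` on `Ω`; and if it holds and `h′` is not identically zero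
then `C/a ≥ 0`. -/
theorem equation_two_characterization
    (Ω : Set ℂ) (hΩ : IsOpen Ω) (a C : ℝ) (ha : a ≠ 0)
    (h ψ : ℂ → ℂ)
    (hh : DifferentiableOn ℂ h Ω) (hψ : DifferentiableOn ℂ ψ Ω)
    (b c : ℝ → ℝ → ℝ)
    (hb : ∀ x y : ℝ, b x y = 2 * a * (h (x + y * Complex.I)).re)
    (hc : ∀ x y : ℝ, c x y = C * Real.exp (2 * (ψ (x + y * Complex.I)).re)) :
    ((∀ x y : ℝ, (x + y * Complex.I) ∈ Ω →
        a * (pdx2 (pdx2 c) x y + pdy2 (pdy2 c) x y) +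
          b x y * (pdx2 (pdx2 b) x y + pdy2 (pdy2 b) x y)
        = (pdx2 b x y)^2 + (pdy2 b x y)^2)
      ↔ (∀ ζ ∈ Ω, a * C * ‖deriv ψ ζ‖^2 * Real.exp (2 * (ψ ζ).re)
          = a^2 * ‖deriv h ζ‖^2)) ∧
    ((∀ x y : ℝ, (x + y * Complex.I) ∈ Ω →
        a * (pdx2 (pdx2 c) x y + pdy2 (pdy2 c) x y) +
          b x y * (pdx2 (pdx2 b) x y + pdy2 (pdy2 b) x y)
        = (pdx2 b x y)^2 + (pdy2 b x y)^2) →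
      (∃ ζ ∈ Ω, deriv h ζ ≠ 0) → 0 ≤ C / a) := by
  have key := key_computation Ω hΩ a C h ψ hh hψ b c hb hc
  have hiff : (∀ x y : ℝ, (x + y * Complex.I) ∈ Ω →
        a * (pdx2 (pdx2 c) x y + pdy2 (pdy2 c) x y) +
          b x y * (pdx2 (pdx2 b) x y + pdy2 (pdy2 b) x y)
        = (pdx2 b x y)^2 + (pdy2 b x y)^2)
      ↔ (∀ ζ ∈ Ω, a * C * ‖deriv ψ ζ‖^2 * Real.exp (2 * (ψ ζ).re)
          = a^2 * ‖deriv h ζ‖^2) := by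
    constructor
    · intro hpde ζ hζ
      have hz : ((ζ.re : ℂ) + (ζ.im : ℂ) * Complex.I) ∈ Ω := by
        rw [Complex.re_add_im]; exact hζ
      have h1 := hpde ζ.re ζ.im hz
      have h2 := key ζ.re ζ.im hz
      rw [Complex.re_add_im] at h2
      linarith
    · intro habs x y hz
      have h2 := key x y hz
      have h3 := habs ((x : ℂ) + (y : ℂ) * Complex.I) hz
      linarith
  refine ⟨hiff, ?_⟩
  rintro hpde ⟨ζ, hζ, hne⟩
  have heq := hiff.mp hpde ζ hζ
  have habs : ‖deriv h ζ‖ ≠ 0 := norm_ne_zero_iff.mpr hne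
  have hpos : 0 < a ^ 2 * ‖deriv h ζ‖ ^ 2 := by positivity
  have hs : 0 ≤ ‖deriv ψ ζ‖ ^ 2 := by positivity
  have hE : 0 < Real.exp (2 * (ψ ζ).re) := Real.exp_pos _
  have haC : 0 < a * C := by
    rcases lt_or_ge 0 (a * C) with hlt | hle
    · exact hlt
    · exfalso
      have hprod : a * C * (‖deriv ψ ζ‖ ^ 2 * Real.exp (2 * (ψ ζ).re)) ≤ 0 :=
        mul_nonpos_of_nonpos_of_nonneg hle (mul_nonneg hs hE.le)
      nlinarith
  have hrw : C / a = (a * C) / a ^ 2 := by field_simp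
  rw [hrw]
  exact le_of_lt (div_pos haC (by positivity))
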